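/- Energy conservation of the mass–energy conservative (MEC) scheme in the deterministic case: let Δt > 0, let σ ≥ 1 be an integer, and let u⁰, u¹ ∈ ℂ^{N+1}. Assume there exist real numbers V_0, …, V_N such that V_j·(|u¹_j|² − |u⁰_j|²) = (1/(σ+1))·(|u¹_j|^{2(σ+1)} − |u⁰_j|^{2(σ+1)}) for every 0 ≤ j ≤ N, and that for every 0 ≤ j ≤ N one has i·(u¹_j − u⁰_j)/Δt + D₂u^{1/2}_j + V_j·u^{1/2}_j = 0, where u^{1/2}_j := (u⁰_j + u¹_j)/2 (extended by the Neumann conventions). Then the discrete energy is conserved: H_dis[u¹] = H_dis[u⁰]. -/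

import Mathlib

open Finset

/-- Extended mesh size `Δx_j` for `j ∈ {-1, 0, …, N}`, with the conventions
`Δx_{-1} := Δx_0` and `Δx_N := Δx_{N-1}`. -/
noncomputable def meshDx (N : ℕ) (x : ℕ → ℝ) (j : ℤ) : ℝ :=
  if j ≤ 0 then x 1 - x 0
  else if (N : ℤ) ≤ j then x N - x (N - 1)
  else x (j.toNat + 1) - x j.toNat

/-- Neumann extension of a vector `u ∈ ℂ^{N+1}`: `u_{-1} := u_0`, `u_{N+1} := u_N`. -/
noncomputable def neumannExt (N : ℕ) (u : ℕ → ℂ) (j : ℤ) : ℂ :=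
  if j ≤ 0 then u 0
  else if (N : ℤ) ≤ j then u N
  else u j.toNat

/-- Discrete second-difference operator on the (possibly non-uniform) mesh. -/
noncomputable def D2 (N : ℕ) (x : ℕ → ℝ) (u : ℕ → ℂ) (j : ℕ) : ℂ :=
  2 * neumannExt N u ((j : ℤ) - 1) /
      ((meshDx N x ((j : ℤ) - 1) : ℂ) * ((meshDx N x ((j : ℤ) - 1) : ℂ) + (meshDx N x (j : ℤ) : ℂ)))
    - 2 * neumannExt N u (j : ℤ) / ((meshDx N x ((j : ℤ) - 1) : ℂ) * (meshDx N x (j : ℤ) : ℂ))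
    + 2 * neumannExt N u ((j : ℤ) + 1) /
      (((meshDx N x ((j : ℤ) - 1) : ℂ) + (meshDx N x (j : ℤ) : ℂ)) * (meshDx N x (j : ℤ) : ℂ))

/-- Discrete mass `M_dis[u] = (1/2)·Σ_{j=0}^{N} |u_j|²·(Δx_j + Δx_{j-1})`. -/
noncomputable def Mdis (N : ℕ) (x : ℕ → ℝ) (u : ℕ → ℂ) : ℝ :=
  (1 / 2) * ∑ j ∈ Finset.range (N + 1),
    ‖u j‖ ^ 2 * (meshDx N x (j : ℤ) + meshDx N x ((j : ℤ) - 1))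

/-- Discrete energy
`H_dis[u] = (1/2)·Σ_{j=0}^{N} |u_{j+1}-u_j|²/Δx_j
  - (1/(2(σ+1)))·Σ_{j=0}^{N} ((Δx_j+Δx_{j-1})/2)·|u_j|^{2(σ+1)}`
(the value `u_{N+1}` being given by the Neumann convention). -/
noncomputable def Hdis (N : ℕ) (x : ℕ → ℝ) (σ : ℕ) (u : ℕ → ℂ) : ℝ :=
  (1 / 2) * ∑ j ∈ Finset.range (N + 1),
      ‖neumannExt N u ((j : ℤ) + 1) - u j‖ ^ 2 / meshDx N x (j : ℤ)
    - (1 / (2 * ((σ : ℝ) + 1))) * ∑ j ∈ Finset.range (N + 1),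
      ((meshDx N x (j : ℤ) + meshDx N x ((j : ℤ) - 1)) / 2) * ‖u j‖ ^ (2 * (σ + 1))


lemma neumannExt_eq (N : ℕ) (u : ℕ → ℂ) (k : ℤ) :
    neumannExt N u k = u (min k.toNat N) := by
  unfold neumannExt
  split_ifs with h1 h2 <;> congr 1 <;> omega

lemma meshDx_pos {N : ℕ} (hN : 1 ≤ N) {x : ℕ → ℝ}
    (hx : ∀ j, j < N → x j < x (j + 1)) (k : ℤ) : 0 < meshDx N x k := by
  unfold meshDx
  split_ifs with h1 h2
  · have h := hx 0 hN
    norm_num at h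
    linarith
  · have h := hx (N - 1) (by omega)
    rw [Nat.sub_add_cancel hN] at h
    linarith
  · have h3 : k.toNat < N := by omega
    have h := hx k.toNat h3
    linarith

lemma Akey' (a b : ℂ) (ha : a ≠ 0) (hb : b ≠ 0) (hab : a + b ≠ 0) (p q r : ℂ) :
    (b + a) / 2 * (2 * p / (a * (a + b)) - 2 * q / (a * b) + 2 * r / ((a + b) * b))
      = (r - q) / b - (q - p) / a := by
  have e1 : (b + a) / 2 * (2 * p / (a * (a + b))) = p / a := by
    rw [div_mul_div_comm, div_eq_div_iff (mul_ne_zero two_ne_zero (mul_ne_zero ha hab)) ha]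
    ring
  have e2 : (b + a) / 2 * (2 * q / (a * b)) = q / a + q / b := by
    rw [div_mul_div_comm, div_add_div _ _ ha hb,
      div_eq_div_iff (mul_ne_zero two_ne_zero (mul_ne_zero ha hb)) (mul_ne_zero ha hb)]
    ring
  have e3 : (b + a) / 2 * (2 * r / ((a + b) * b)) = r / b := by
    rw [div_mul_div_comm, div_eq_div_iff (mul_ne_zero two_ne_zero (mul_ne_zero hab hb)) hb]
    ring
  rw [mul_add, mul_sub, e1, e2, e3, sub_div, sub_div]
  ring

lemma norm_sq_eq_re_im (z : ℂ) : ‖z‖ ^ 2 = z.re ^ 2 + z.im ^ 2 := by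
  rw [Complex.sq_norm, Complex.normSq_apply]; ring

lemma kin_term (a b : ℂ) (r : ℝ) :
    1 / 2 * (‖a‖ ^ 2 / r) - 1 / 2 * (‖b‖ ^ 2 / r)
      = ((b + a) / 2 * (starRingEnd ℂ) (a - b) / (r : ℂ)).re := by
  rw [Complex.div_ofReal_re]
  rw [norm_sq_eq_re_im, norm_sq_eq_re_im]
  have h2 : ((b + a) / 2 * (starRingEnd ℂ) (a - b)).re
      = (a.re ^ 2 + a.im ^ 2 - (b.re ^ 2 + b.im ^ 2)) / 2 := by
    simp [Complex.mul_re, Complex.div_re, Complex.normSq_apply]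
    ring
  rw [h2]
  ring

lemma re_wconj (a b : ℂ) :
    ((a + b) / 2 * (starRingEnd ℂ) (b - a)).re = (‖b‖ ^ 2 - ‖a‖ ^ 2) / 2 := by
  rw [norm_sq_eq_re_im, norm_sq_eq_re_im]
  simp [Complex.mul_re, Complex.div_re, Complex.normSq_apply]
  ring

lemma re_scheme_term (m t c : ℝ) (z w : ℂ) :
    ((m : ℂ) * (-(Complex.I * z) - (t : ℂ) * ((c : ℂ) * w)) * (starRingEnd ℂ) z).re
      = -(m * t * c) * (w * (starRingEnd ℂ) z).re := by
  simp [Complex.mul_re, Complex.mul_im]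
  ring

/-- Energy conservation for the mass–energy conservative (MEC) scheme in the
deterministic case. -/
theorem mec_scheme_energy_conservation
    (N : ℕ) (hN : 1 ≤ N) (x : ℕ → ℝ) (hx : ∀ j, j < N → x j < x (j + 1))
    (Δt : ℝ) (hΔt : 0 < Δt)
    (σ : ℕ) (hσ : 1 ≤ σ) (u0 u1 : ℕ → ℂ) (V : ℕ → ℝ)
    (hV : ∀ j ≤ N, V j * (‖u1 j‖ ^ 2 - ‖u0 j‖ ^ 2)
      = (1 / ((σ : ℝ) + 1)) * (‖u1 j‖ ^ (2 * (σ + 1)) - ‖u0 j‖ ^ (2 * (σ + 1))))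
    (hscheme : ∀ j ≤ N,
      Complex.I * (u1 j - u0 j) / (Δt : ℂ)
        + D2 N x (fun k => (u0 k + u1 k) / 2) j
        + (V j : ℂ) * ((u0 j + u1 j) / 2) = 0) :
    Hdis N x σ u1 = Hdis N x σ u0 := by
  classical
  have ht : (Δt:ℂ) ≠ 0 := by exact_mod_cast hΔt.ne'
  have hdpos : ∀ k : ℤ, 0 < meshDx N x k := meshDx_pos hN hx
  have hne : ∀ (u : ℕ → ℂ) (k : ℤ) (m : ℕ), min k.toNat N = m → neumannExt N u k = u m := by
    intro u k m h
    rw [neumannExt_eq, h]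
  -- the scheme, rewritten in product form
  have hsch : ∀ j, j ≤ N → (Δt:ℂ) * D2 N x (fun k => (u0 k + u1 k) / 2) j
      = -(Complex.I * (u1 j - u0 j)) - (Δt:ℂ) * ((V j : ℂ) * ((u0 j + u1 j) / 2)) := by
    intro j hj
    have h := hscheme j hj
    have hD : D2 N x (fun k => (u0 k + u1 k) / 2) j
        = -(Complex.I * (u1 j - u0 j) / (Δt:ℂ)) - (V j : ℂ) * ((u0 j + u1 j) / 2) := by
      linear_combination h
    rw [hD]
    field_simp
  -- key pointwise summation-by-parts identity
  have hA : ∀ j : ℕ,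
      (((meshDx N x (j:ℤ) + meshDx N x ((j:ℤ)-1)) / 2 : ℝ) : ℂ)
          * D2 N x (fun k => (u0 k + u1 k) / 2) j
        = (neumannExt N (fun k => (u0 k + u1 k) / 2) ((j:ℤ)+1)
              - neumannExt N (fun k => (u0 k + u1 k) / 2) (j:ℤ)) / (meshDx N x (j:ℤ) : ℂ)
          - (neumannExt N (fun k => (u0 k + u1 k) / 2) (j:ℤ)
              - neumannExt N (fun k => (u0 k + u1 k) / 2) ((j:ℤ)-1)) / (meshDx N x ((j:ℤ)-1) : ℂ) := by
    intro j
    have ha : ((meshDx N x ((j:ℤ)-1) : ℝ) : ℂ) ≠ 0 := by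
      exact_mod_cast (hdpos ((j:ℤ)-1)).ne'
    have hb : ((meshDx N x (j:ℤ) : ℝ) : ℂ) ≠ 0 := by
      exact_mod_cast (hdpos (j:ℤ)).ne'
    have hab : ((meshDx N x ((j:ℤ)-1) : ℝ) : ℂ) + ((meshDx N x (j:ℤ) : ℝ) : ℂ) ≠ 0 := by
      have h0 : (0:ℝ) < meshDx N x ((j:ℤ)-1) + meshDx N x (j:ℤ) :=
        add_pos (hdpos _) (hdpos _)
      intro hc
      exact h0.ne' (by exact_mod_cast hc)
    unfold D2
    push_cast
    exact Akey' _ _ ha hb hab _ _ _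
  have hGN : neumannExt N (fun k => (u0 k + u1 k) / 2) ((N:ℤ)+1)
      - neumannExt N (fun k => (u0 k + u1 k) / 2) (N:ℤ) = 0 := by
    rw [hne _ _ N (by omega), hne _ _ N (by omega), sub_self]
  -- summation by parts for the full sum
  have hS : ∑ j ∈ Finset.range (N+1),
        (((meshDx N x (j:ℤ) + meshDx N x ((j:ℤ)-1)) / 2 : ℝ) : ℂ)
          * D2 N x (fun k => (u0 k + u1 k) / 2) j * (starRingEnd ℂ) (u1 j - u0 j)
      = ∑ j ∈ Finset.range N,
        (neumannExt N (fun k => (u0 k + u1 k) / 2) ((j:ℤ)+1)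
            - neumannExt N (fun k => (u0 k + u1 k) / 2) (j:ℤ)) / (meshDx N x (j:ℤ) : ℂ)
          * ((starRingEnd ℂ) (u1 j - u0 j) - (starRingEnd ℂ) (u1 (j+1) - u0 (j+1))) := by
    have e0 : ∀ j ∈ Finset.range (N+1),
        (((meshDx N x (j:ℤ) + meshDx N x ((j:ℤ)-1)) / 2 : ℝ) : ℂ)
          * D2 N x (fun k => (u0 k + u1 k) / 2) j * (starRingEnd ℂ) (u1 j - u0 j)
        = (neumannExt N (fun k => (u0 k + u1 k) / 2) ((j:ℤ)+1)
              - neumannExt N (fun k => (u0 k + u1 k) / 2) (j:ℤ)) / (meshDx N x (j:ℤ) : ℂ)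
            * (starRingEnd ℂ) (u1 j - u0 j)
          - (neumannExt N (fun k => (u0 k + u1 k) / 2) (j:ℤ)
              - neumannExt N (fun k => (u0 k + u1 k) / 2) ((j:ℤ)-1)) / (meshDx N x ((j:ℤ)-1) : ℂ)
            * (starRingEnd ℂ) (u1 j - u0 j) := by
      intro j _
      rw [hA j, sub_mul]
    rw [Finset.sum_congr rfl e0, Finset.sum_sub_distrib]
    rw [Finset.sum_range_succ, hGN, zero_div, zero_mul, add_zero]
    rw [Finset.sum_range_succ']
    have hf0 : (neumannExt N (fun k => (u0 k + u1 k) / 2) (((0:ℕ):ℤ))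
        - neumannExt N (fun k => (u0 k + u1 k) / 2) ((((0:ℕ):ℤ))-1)) / (meshDx N x ((((0:ℕ):ℤ))-1) : ℂ)
        * (starRingEnd ℂ) (u1 0 - u0 0) = 0 := by
      rw [hne _ _ 0 (by omega), hne _ _ 0 (by omega), sub_self, zero_div, zero_mul]
    rw [hf0, add_zero]
    have e1 : ∀ j ∈ Finset.range N,
        (neumannExt N (fun k => (u0 k + u1 k) / 2) (((j+1:ℕ):ℤ))
            - neumannExt N (fun k => (u0 k + u1 k) / 2) ((((j+1:ℕ):ℤ))-1)) / (meshDx N x ((((j+1:ℕ):ℤ))-1) : ℂ)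
          * (starRingEnd ℂ) (u1 (j+1) - u0 (j+1))
        = (neumannExt N (fun k => (u0 k + u1 k) / 2) ((j:ℤ)+1)
            - neumannExt N (fun k => (u0 k + u1 k) / 2) (j:ℤ)) / (meshDx N x (j:ℤ) : ℂ)
          * (starRingEnd ℂ) (u1 (j+1) - u0 (j+1)) := by
      intro j _
      have c1 : ((j+1:ℕ):ℤ) = (j:ℤ)+1 := by push_cast; ring
      rw [c1, add_sub_cancel_right]
    rw [Finset.sum_congr rfl e1, ← Finset.sum_sub_distrib]
    apply Finset.sum_congr rfl
    intro j _
    ring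
  -- the kinetic cross sum equals minus the D2 sum
  have hTS : (∑ j ∈ Finset.range (N+1),
        (neumannExt N (fun k => (u0 k + u1 k) / 2) ((j:ℤ)+1)
            - neumannExt N (fun k => (u0 k + u1 k) / 2) (j:ℤ)) / (meshDx N x (j:ℤ) : ℂ)
          * ((starRingEnd ℂ) (neumannExt N u1 ((j:ℤ)+1) - u1 j)
              - (starRingEnd ℂ) (neumannExt N u0 ((j:ℤ)+1) - u0 j)))
      = -(∑ j ∈ Finset.range (N+1),
        (((meshDx N x (j:ℤ) + meshDx N x ((j:ℤ)-1)) / 2 : ℝ) : ℂ)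
          * D2 N x (fun k => (u0 k + u1 k) / 2) j * (starRingEnd ℂ) (u1 j - u0 j)) := by
    rw [hS, Finset.sum_range_succ, hGN, zero_div, zero_mul, add_zero,
      ← Finset.sum_neg_distrib]
    apply Finset.sum_congr rfl
    intro j hj
    have hj' : j < N := Finset.mem_range.mp hj
    rw [hne u1 _ (j+1) (by omega), hne u0 _ (j+1) (by omega)]
    simp only [map_sub]
    ring
  -- kinetic part of the energy difference
  have hkin : 1 / 2 * ∑ j ∈ Finset.range (N + 1),
        ‖neumannExt N u1 ((j : ℤ) + 1) - u1 j‖ ^ 2 / meshDx N x (j : ℤ)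
      - 1 / 2 * ∑ j ∈ Finset.range (N + 1),
        ‖neumannExt N u0 ((j : ℤ) + 1) - u0 j‖ ^ 2 / meshDx N x (j : ℤ)
      = (∑ j ∈ Finset.range (N+1),
        (neumannExt N (fun k => (u0 k + u1 k) / 2) ((j:ℤ)+1)
            - neumannExt N (fun k => (u0 k + u1 k) / 2) (j:ℤ)) / (meshDx N x (j:ℤ) : ℂ)
          * ((starRingEnd ℂ) (neumannExt N u1 ((j:ℤ)+1) - u1 j)
              - (starRingEnd ℂ) (neumannExt N u0 ((j:ℤ)+1) - u0 j))).re := by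
    rw [Complex.re_sum, Finset.mul_sum, Finset.mul_sum, ← Finset.sum_sub_distrib]
    apply Finset.sum_congr rfl
    intro j hj
    have hj' : j ≤ N := by have := Finset.mem_range.mp hj; omega
    simp only [neumannExt_eq]
    have hm0 : min ((j:ℤ)).toNat N = j := by omega
    rw [hm0]
    rw [kin_term (u1 (min ((j:ℤ)+1).toNat N) - u1 j) (u0 (min ((j:ℤ)+1).toNat N) - u0 j)
      (meshDx N x (j:ℤ))]
    refine congrArg Complex.re ?_
    simp only [map_sub]
    ring
  -- use the scheme on the D2 sum
  have hS2 : (Δt:ℂ) * ∑ j ∈ Finset.range (N+1),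
        (((meshDx N x (j:ℤ) + meshDx N x ((j:ℤ)-1)) / 2 : ℝ) : ℂ)
          * D2 N x (fun k => (u0 k + u1 k) / 2) j * (starRingEnd ℂ) (u1 j - u0 j)
      = ∑ j ∈ Finset.range (N+1),
        (((meshDx N x (j:ℤ) + meshDx N x ((j:ℤ)-1)) / 2 : ℝ) : ℂ)
          * (-(Complex.I * (u1 j - u0 j)) - (Δt:ℂ) * ((V j : ℂ) * ((u0 j + u1 j) / 2)))
          * (starRingEnd ℂ) (u1 j - u0 j) := by
    rw [Finset.mul_sum]
    apply Finset.sum_congr rfl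
    intro j hj
    have hj' : j ≤ N := by have := Finset.mem_range.mp hj; omega
    linear_combination ((((meshDx N x (j:ℤ) + meshDx N x ((j:ℤ)-1)) / 2 : ℝ) : ℂ)
      * (starRingEnd ℂ) (u1 j - u0 j)) * hsch j hj'
  -- real part of the D2 sum
  have hS3 : Δt * (∑ j ∈ Finset.range (N+1),
        (((meshDx N x (j:ℤ) + meshDx N x ((j:ℤ)-1)) / 2 : ℝ) : ℂ)
          * D2 N x (fun k => (u0 k + u1 k) / 2) j * (starRingEnd ℂ) (u1 j - u0 j)).re
      = ∑ j ∈ Finset.range (N+1),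
        -(((meshDx N x (j:ℤ) + meshDx N x ((j:ℤ)-1)) / 2) * Δt * V j)
          * ((‖u1 j‖ ^ 2 - ‖u0 j‖ ^ 2) / 2) := by
    rw [← Complex.re_ofReal_mul, hS2, Complex.re_sum]
    apply Finset.sum_congr rfl
    intro j _
    rw [re_scheme_term, re_wconj]
  -- insert the discrete energy relation for V
  have hS5 : ∑ j ∈ Finset.range (N+1),
        -(((meshDx N x (j:ℤ) + meshDx N x ((j:ℤ)-1)) / 2) * Δt * V j)
          * ((‖u1 j‖ ^ 2 - ‖u0 j‖ ^ 2) / 2)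
      = Δt * (-(1 / (2 * ((σ:ℝ) + 1))) *
          ((∑ j ∈ Finset.range (N + 1),
              ((meshDx N x (j : ℤ) + meshDx N x ((j : ℤ) - 1)) / 2) * ‖u1 j‖ ^ (2 * (σ + 1)))
            - ∑ j ∈ Finset.range (N + 1),
              ((meshDx N x (j : ℤ) + meshDx N x ((j : ℤ) - 1)) / 2) * ‖u0 j‖ ^ (2 * (σ + 1)))) := by
    rw [← Finset.sum_sub_distrib, Finset.mul_sum, Finset.mul_sum]
    apply Finset.sum_congr rfl
    intro j hj
    have hj' : j ≤ N := by have := Finset.mem_range.mp hj; omega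
    have hσ0 : ((σ:ℝ) + 1) ≠ 0 := by positivity
    have hc : (1:ℝ) / (2 * ((σ:ℝ) + 1)) = 1 / 2 * (1 / ((σ:ℝ) + 1)) := by
      field_simp
    rw [hc]
    linear_combination (-(((meshDx N x (j:ℤ) + meshDx N x ((j:ℤ)-1)) / 2) * Δt) / 2) * hV j hj'
  have hSre : (∑ j ∈ Finset.range (N+1),
        (((meshDx N x (j:ℤ) + meshDx N x ((j:ℤ)-1)) / 2 : ℝ) : ℂ)
          * D2 N x (fun k => (u0 k + u1 k) / 2) j * (starRingEnd ℂ) (u1 j - u0 j)).re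
      = -(1 / (2 * ((σ:ℝ) + 1))) *
          ((∑ j ∈ Finset.range (N + 1),
              ((meshDx N x (j : ℤ) + meshDx N x ((j : ℤ) - 1)) / 2) * ‖u1 j‖ ^ (2 * (σ + 1)))
            - ∑ j ∈ Finset.range (N + 1),
              ((meshDx N x (j : ℤ) + meshDx N x ((j : ℤ) - 1)) / 2) * ‖u0 j‖ ^ (2 * (σ + 1))) :=
    mul_left_cancel₀ hΔt.ne' (hS3.trans hS5)
  have hTre : (∑ j ∈ Finset.range (N+1),
        (neumannExt N (fun k => (u0 k + u1 k) / 2) ((j:ℤ)+1)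
            - neumannExt N (fun k => (u0 k + u1 k) / 2) (j:ℤ)) / (meshDx N x (j:ℤ) : ℂ)
          * ((starRingEnd ℂ) (neumannExt N u1 ((j:ℤ)+1) - u1 j)
              - (starRingEnd ℂ) (neumannExt N u0 ((j:ℤ)+1) - u0 j))).re
      = 1 / (2 * ((σ:ℝ) + 1)) *
          ((∑ j ∈ Finset.range (N + 1),
              ((meshDx N x (j : ℤ) + meshDx N x ((j : ℤ) - 1)) / 2) * ‖u1 j‖ ^ (2 * (σ + 1)))
            - ∑ j ∈ Finset.range (N + 1),
              ((meshDx N x (j : ℤ) + meshDx N x ((j : ℤ) - 1)) / 2) * ‖u0 j‖ ^ (2 * (σ + 1))) := by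
    rw [hTS, Complex.neg_re, hSre]
    ring
  unfold Hdis
  linear_combination hkin + hTre
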